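/- For every p ∈ ℝ there exist real numbers α > 0, β > 0, and b < c such that the three equations (αc + βb)/(α + β) = 0, αβ·(c − b)²/((α + β)²·(α + β + 1)) = 1, and 2(β − α)·√(α + β + 1)/((α + β + 2)·√(αβ)) = p all hold. -/
import Mathlib


theorem stmt_19 (p : ℝ) :
    ∃ (α β b c : ℝ), 0 < α ∧ 0 < β ∧ b < c ∧
      (α * c + β * b) / (α + β) = 0 ∧
      α * β * (c - b) ^ 2 / ((α + β) ^ 2 * (α + β + 1)) = 1 ∧
      2 * (β - α) * Real.sqrt (α + β + 1) / ((α + β + 2) * Real.sqrt (α * β)) = p := by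
  set q : ℝ := 3 * p / (4 * Real.sqrt 2) with hq
  have hs2pos : (0:ℝ) < 1 + q ^ 2 := by positivity
  set s : ℝ := Real.sqrt (1 + q ^ 2) with hsdef
  have hspos : 0 < s := Real.sqrt_pos.mpr hs2pos
  have hs2 : s ^ 2 = 1 + q ^ 2 := Real.sq_sqrt hs2pos.le
  have hqs : |q| < s := by
    have : |q| = Real.sqrt (q ^ 2) := (Real.sqrt_sq_eq_abs q).symm
    rw [this, hsdef]
    exact Real.sqrt_lt_sqrt (by positivity) (by linarith)
  have hd1 : q / s < 1 := by
    rw [div_lt_one hspos]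
    exact lt_of_le_of_lt (le_abs_self q) hqs
  have hd2 : -1 < q / s := by
    rw [lt_div_iff₀ hspos]
    have := neg_abs_le q
    linarith [neg_lt_of_abs_lt hqs]
  set α : ℝ := (1 - q / s) / 2 with hα
  set β : ℝ := (1 + q / s) / 2 with hβ
  have hαpos : 0 < α := by rw [hα]; linarith
  have hβpos : 0 < β := by rw [hβ]; linarith
  have hab : α + β = 1 := by rw [hα, hβ]; ring
  set L : ℝ := 2 * Real.sqrt 2 * s with hL
  have h2pos : (0:ℝ) < Real.sqrt 2 := Real.sqrt_pos.mpr (by norm_num)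
  have hLpos : 0 < L := by rw [hL]; positivity
  refine ⟨α, β, -α * L, β * L, hαpos, hβpos, ?_, ?_, ?_, ?_⟩
  · nlinarith
  · rw [hab]; ring_nf
  · have hcb : β * L - (-α * L) = L := by
      have : β * L - (-α * L) = (α + β) * L := by ring
      rw [this, hab, one_mul]
    rw [hcb, hab]
    have hαβ : α * β = 1 / (4 * s ^ 2) := by
      rw [hα, hβ]
      field_simp
      nlinarith
    have hL2 : L ^ 2 = 8 * s ^ 2 := by
      rw [hL]
      have : Real.sqrt 2 ^ 2 = 2 := Real.sq_sqrt (by norm_num)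
      nlinarith
    rw [hαβ, hL2]
    field_simp
    ring
  · have hαβ : α * β = 1 / (4 * s ^ 2) := by
      rw [hα, hβ]
      field_simp
      nlinarith
    have hsqrtαβ : Real.sqrt (α * β) = 1 / (2 * s) := by
      rw [hαβ]
      have : 1 / (4 * s ^ 2) = (1 / (2 * s)) ^ 2 := by field_simp; ring
      rw [this, Real.sqrt_sq (by positivity)]
    have hba : β - α = q / s := by rw [hα, hβ]; ring
    rw [hab, hba, hsqrtαβ]
    rw [show (1:ℝ) + 1 = 2 by norm_num]
    have step : 2 * (q / s) * Real.sqrt 2 / ((1 + 2) * (1 / (2 * s)))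
        = 4 * Real.sqrt 2 * q / 3 := by
      field_simp
      ring
    rw [step, hq]
    have h2ne : Real.sqrt 2 ≠ 0 := h2pos.ne'
    field_simp
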